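/- Let T be the simplicial cone on the first barycentric subdivision of Δ^{n-1}, i.e., the nerve of the poset of nondegenerate simplices of Δ^{n-1} with an adjoined terminal element v, viewed as a triangulation of Δ^n. Let c ∈ T be the vertex corresponding to the top-dimensional simplex of Δ^{n-1}, and let T' be the full subcomplex of T on all vertices except c. Then T' is a triangulation of the horn Λ^n (the union of all faces of Δ^n except the face opposite the cone point), and the simplicial map T → T' sending c to v and fixing all other vertices is a retraction of the inclusion T' ↪ T. -/

import Mathlib

open Set Finset

namespace ConeSubdivision

/-- The poset of nondegenerate simplices of the simplex `Δ^n` with vertex set `Fin (n+1)`,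
i.e. nonempty subsets of `Fin (n+1)` ordered by inclusion.  The simplicial cone `T` on the first
barycentric subdivision of `Δ^n` is the nerve of `WithTop P` (with the adjoined terminal element
`⊤` as the cone vertex `v`). -/
def P (n : ℕ) : Type := {s : Finset (Fin (n + 1)) // s.Nonempty}

instance (n : ℕ) : PartialOrder (P n) :=
  Subtype.partialOrder _

/-- The vertex `c` of `T` corresponding to the top-dimensional simplex of `Δ^n`. -/
def cV (n : ℕ) : WithTop (P n) :=
  WithTop.some (⟨Finset.univ, Finset.univ_nonempty⟩ : P n)

/-- The simplicial retraction `T → T'` sending `c` to the cone vertex `v = ⊤` and fixing all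
other vertices. -/
noncomputable def retr (n : ℕ) : WithTop (P n) → WithTop (P n) :=
  fun x => letI := Classical.dec (x = cV n); if x = cV n then ⊤ else x

/-- The realization of the vertices of `T` in the geometric simplex
`Δ^{n+1} ⊂ (Fin (n+1) → ℝ) × ℝ` (base coordinates and cone coordinate): a simplex `s` of `Δ^n`
goes to its barycenter in the base face, and the cone vertex `⊤` goes to the cone point. -/
noncomputable def vertexPt (n : ℕ) : WithTop (P n) → (Fin (n + 1) → ℝ) × ℝ :=
  WithTop.recTopCoe ((0 : Fin (n + 1) → ℝ), (1 : ℝ))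
    (fun s => (fun i => if i ∈ s.1 then ((s.1.card : ℝ))⁻¹ else 0, (0 : ℝ)))

/-- The geometric horn `Λ^{n+1} ⊂ Δ^{n+1}`: the union of all facets of the simplex except the
face opposite the cone point, i.e. the points of the simplex with some base coordinate zero. -/
def hornSet (n : ℕ) : Set ((Fin (n + 1) → ℝ) × ℝ) :=
  {p | (∀ i, 0 ≤ p.1 i) ∧ 0 ≤ p.2 ∧ (∑ i, p.1 i) + p.2 = 1 ∧ ∃ j, p.1 j = 0}

/- ---------------- auxiliary lemmas ---------------- -/

lemma vertexPt_top (n : ℕ) : vertexPt n ⊤ = ((0 : Fin (n + 1) → ℝ), (1 : ℝ)) := rfl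

lemma vertexPt_coe (n : ℕ) (s : P n) :
    vertexPt n (↑s) =
      (fun i => if i ∈ s.1 then ((s.1.card : ℝ))⁻¹ else 0, (0 : ℝ)) := rfl

lemma retr_cV (n : ℕ) : retr n (cV n) = ⊤ := by
  simp [retr]

lemma retr_of_ne {n : ℕ} {x : WithTop (P n)} (h : x ≠ cV n) : retr n x = x := by
  simp [retr, h]

lemma P_le_iff {n : ℕ} (a b : P n) : a ≤ b ↔ a.1 ⊆ b.1 := Iff.rfl

lemma cV_le_iff {n : ℕ} {y : WithTop (P n)} (h : cV n ≤ y) : y = cV n ∨ y = ⊤ := by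
  induction y using WithTop.recTopCoe with
  | top => exact Or.inr rfl
  | coe s =>
      left
      have hs : (⟨Finset.univ, Finset.univ_nonempty⟩ : P n) ≤ s := WithTop.coe_le_coe.mp h
      have : s.1 = Finset.univ := Finset.univ_subset_iff.mp ((P_le_iff _ _).mp hs)
      have : s = ⟨Finset.univ, Finset.univ_nonempty⟩ := Subtype.ext this
      rw [cV, this]

/-- The underlying finset of a vertex of `T` (the cone vertex gets `∅`). -/
def base {n : ℕ} : WithTop (P n) → Finset (Fin (n + 1)) :=
  WithTop.recTopCoe ∅ (fun s => s.1)

lemma base_comparable {n : ℕ} {x y : WithTop (P n)} (h : x ≤ y) :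
    base x ⊆ base y ∨ base y ⊆ base x := by
  induction y using WithTop.recTopCoe with
  | top => right; simp [base]
  | coe s =>
      induction x using WithTop.recTopCoe with
      | top => exact absurd h (by simp)
      | coe u =>
          left
          simpa [base] using (P_le_iff u s).mp (WithTop.coe_le_coe.mp h)

lemma base_ne_univ {n : ℕ} {x : WithTop (P n)} (h : x ≠ cV n) :
    base x ≠ Finset.univ := by
  induction x using WithTop.recTopCoe with
  | top =>
      simp only [base, WithTop.recTopCoe_top]
      exact fun he => (Finset.univ_nonempty (α := Fin (n + 1))).ne_empty he.symm
  | coe s =>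
      intro he
      exact h (by rw [cV]; exact congrArg _ (Subtype.ext (by simpa [base] using he)))

/-- Forward inclusion: the geometric simplex of any chain avoiding `c` lies in the horn. -/
lemma chain_hull_subset_horn (n : ℕ) (ch : Finset (WithTop (P n)))
    (hch : IsChain (· ≤ ·) (ch : Set (WithTop (P n)))) (hc : cV n ∉ ch) :
    convexHull ℝ (vertexPt n '' (ch : Set (WithTop (P n)))) ⊆ hornSet n := by
  rcases ch.eq_empty_or_nonempty with rfl | hne
  · simp
  -- find a coordinate j missed by every simplex in the chain
  obtain ⟨j, hj⟩ : ∃ j : Fin (n + 1), ∀ x ∈ ch, j ∉ base x := by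
    obtain ⟨m, hm, hmax⟩ := (ch.image base).exists_maximal (hne.image base)
    obtain ⟨x0, hx0, hbx0⟩ := Finset.mem_image.mp hm
    have hmu : m ≠ Finset.univ := hbx0 ▸ base_ne_univ (fun he => hc (he ▸ hx0))
    obtain ⟨j, hjm⟩ : ∃ j, j ∉ m := by
      by_contra hcon
      push_neg at hcon
      exact hmu (Finset.eq_univ_iff_forall.mpr hcon)
    refine ⟨j, fun x hx hjx => ?_⟩
    have hcomp : base x ⊆ m ∨ m ⊆ base x := by
      rcases eq_or_ne x x0 with rfl | hxx
      · left; rw [hbx0]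
      · rcases hch hx hx0 hxx with h | h
        · rcases base_comparable h with h' | h'
          · left; exact hbx0 ▸ h'
          · right; exact hbx0 ▸ h'
        · rcases base_comparable h with h' | h'
          · right; exact hbx0 ▸ h'
          · left; exact hbx0 ▸ h'
    rcases hcomp with h | h
    · exact hjm (h hjx)
    · have : m = base x := by
        rcases Finset.mem_image.mp hm with _
        by_contra hne'
        exact hne' (le_antisymm h (hmax (Finset.mem_image_of_mem base hx) h))
      exact hjm (this ▸ hjx)
  -- the convex set cut out by coordinate j
  set A : Set ((Fin (n + 1) → ℝ) × ℝ) :=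
    {p | (∀ i, 0 ≤ p.1 i) ∧ 0 ≤ p.2 ∧ (∑ i, p.1 i) + p.2 = 1 ∧ p.1 j = 0} with hA
  have hconv : Convex ℝ A := by
    intro p hp q hq a b ha hb hab
    obtain ⟨hp1, hp2, hp3, hp4⟩ := hp
    obtain ⟨hq1, hq2, hq3, hq4⟩ := hq
    refine ⟨fun i => ?_, ?_, ?_, ?_⟩
    · have := add_nonneg (mul_nonneg ha (hp1 i)) (mul_nonneg hb (hq1 i))
      simpa [Prod.fst_add, Prod.smul_fst] using this
    · have := add_nonneg (mul_nonneg ha hp2) (mul_nonneg hb hq2)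
      simpa [Prod.snd_add, Prod.smul_snd] using this
    · simp only [Prod.fst_add, Prod.smul_fst, Prod.snd_add, Prod.smul_snd, Pi.add_apply,
        Pi.smul_apply, smul_eq_mul]
      rw [Finset.sum_add_distrib, ← Finset.mul_sum, ← Finset.mul_sum]
      nlinarith [hp3, hq3]
    · simp only [Prod.fst_add, Prod.smul_fst, Pi.add_apply, Pi.smul_apply, smul_eq_mul,
        hp4, hq4]
      ring
  have hsub : vertexPt n '' (ch : Set (WithTop (P n))) ⊆ A := by
    rintro - ⟨x, hx, rfl⟩
    induction x using WithTop.recTopCoe with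
    | top =>
        refine ⟨fun i => by simp [vertexPt_top], by simp [vertexPt_top],
          by simp [vertexPt_top], by simp [vertexPt_top]⟩
    | coe s =>
        have hcard : (0 : ℝ) < (s.1.card : ℝ) := by
          exact_mod_cast Finset.card_pos.mpr s.2
        refine ⟨fun i => ?_, ?_, ?_, ?_⟩
        · rw [vertexPt_coe]
          dsimp only
          split
          · positivity
          · exact le_rfl
        · rw [vertexPt_coe]
        · rw [vertexPt_coe]
          dsimp only
          rw [Finset.sum_ite_mem, Finset.univ_inter, Finset.sum_const, nsmul_eq_mul,
            mul_inv_cancel₀ (ne_of_gt hcard)]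
          ring
        · rw [vertexPt_coe]
          have : j ∉ s.1 := by simpa [base] using hj _ hx
          simp [this]
  refine (convexHull_min hsub hconv).trans ?_
  rintro p ⟨h1, h2, h3, h4⟩
  exact ⟨h1, h2, h3, j, h4⟩

/-- Reverse inclusion: every point of the horn lies in the geometric simplex of some chain
avoiding `c`. -/
lemma horn_subset_union (n : ℕ) {p : (Fin (n + 1) → ℝ) × ℝ} (hp : p ∈ hornSet n) :
    ∃ ch : Finset (WithTop (P n)), IsChain (· ≤ ·) (ch : Set (WithTop (P n))) ∧
      cV n ∉ ch ∧ p ∈ convexHull ℝ (vertexPt n '' (ch : Set (WithTop (P n)))) := by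
  classical
  obtain ⟨hq, ht, hsum, j0, hj0⟩ := hp
  set σ := Tuple.sort p.1 with hσ
  have hmono : Monotone (p.1 ∘ σ) := Tuple.monotone_sort p.1
  set rn : ℕ → ℝ := fun m => if h : m < n + 1 then p.1 (σ ⟨m, h⟩) else 1 with hrn
  have hrfin : ∀ k : Fin (n + 1), rn k = p.1 (σ k) := by
    intro k
    simp only [hrn, dif_pos k.isLt, Fin.eta]
  have hrn_nonneg : ∀ m, 0 ≤ rn m := by
    intro m
    by_cases h : m < n + 1
    · simp only [hrn, dif_pos h]
      exact hq _
    · simp only [hrn, dif_neg h]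
      norm_num
  have hrn_mono : ∀ a b : ℕ, a ≤ b → b < n + 1 → rn a ≤ rn b := by
    intro a b hab hb
    have ha : a < n + 1 := lt_of_le_of_lt hab hb
    simp only [hrn, dif_pos ha, dif_pos hb]
    exact hmono (show (⟨a, ha⟩ : Fin (n + 1)) ≤ ⟨b, hb⟩ from hab)
  have hrn0 : rn 0 = 0 := by
    have h1 : rn (σ.symm j0) = 0 := by
      rw [hrfin (σ.symm j0), Equiv.apply_symm_apply, hj0]
    have h2 : rn 0 ≤ rn (σ.symm j0) := hrn_mono 0 _ (Nat.zero_le _) (σ.symm j0).isLt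
    exact le_antisymm (h1 ▸ h2) (hrn_nonneg 0)
  have hrsum : ∑ m ∈ Finset.range (n + 1), rn m = 1 - p.2 := by
    rw [← Fin.sum_univ_eq_sum_range rn (n + 1)]
    rw [Finset.sum_congr rfl (fun k _ => hrfin k)]
    rw [Equiv.sum_comp σ p.1]
    linarith [hsum]
  -- the chain of simplices
  set S : Fin (n + 1) → Finset (Fin (n + 1)) := fun k => (Finset.Ici k).image σ with hS
  have hSmem : ∀ (k : Fin (n + 1)) (j : Fin (n + 1)), j ∈ S k ↔ k ≤ σ.symm j := by
    intro k j
    simp only [hS, Finset.mem_image, Finset.mem_Ici]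
    constructor
    · rintro ⟨m, hm, rfl⟩
      rwa [Equiv.symm_apply_apply]
    · intro h
      exact ⟨σ.symm j, h, Equiv.apply_symm_apply _ _⟩
  have hSne : ∀ k, (S k).Nonempty := by
    intro k
    exact ⟨σ k, (hSmem k _).mpr (by rw [Equiv.symm_apply_apply])⟩
  have hScard : ∀ k, (S k).card = n + 1 - (k : ℕ) := by
    intro k
    simp only [hS]
    rw [Finset.card_image_of_injective _ σ.injective, Fin.card_Ici]
  set F : Fin (n + 1) → WithTop (P n) :=
    fun k => if k = 0 then ⊤ else WithTop.some (⟨S k, hSne k⟩ : P n) with hF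
  have hF0 : F 0 = ⊤ := by simp [hF]
  have hFk : ∀ k : Fin (n + 1), k ≠ 0 → F k = WithTop.some (α := P n) ⟨S k, hSne k⟩ := by
    intro k hk
    exact if_neg hk
  have hFanti : ∀ a b : Fin (n + 1), a ≤ b → F b ≤ F a := by
    intro a b hab
    by_cases ha : a = 0
    · subst ha
      rw [hF0]
      exact le_top
    · have hb : b ≠ 0 := fun hb => ha (Fin.le_zero_iff.mp (hb ▸ hab))
      rw [hFk a ha, hFk b hb]
      refine WithTop.coe_le_coe.mpr ?_
      refine (P_le_iff _ _).mpr ?_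
      exact Finset.image_subset_image (Finset.Ici_subset_Ici.mpr hab)
  have hchain : IsChain (· ≤ ·)
      ((Finset.image F Finset.univ : Finset (WithTop (P n))) : Set (WithTop (P n))) := by
    intro x hx y hy _
    obtain ⟨a, -, rfl⟩ := Finset.mem_image.mp (Finset.mem_coe.mp hx)
    obtain ⟨b, -, rfl⟩ := Finset.mem_image.mp (Finset.mem_coe.mp hy)
    rcases le_total a b with h | h
    · exact Or.inr (hFanti a b h)
    · exact Or.inl (hFanti b a h)
  have hcV : cV n ∉ Finset.image F Finset.univ := by
    intro h
    obtain ⟨k, -, hk⟩ := Finset.mem_image.mp h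
    by_cases hk0 : k = 0
    · subst hk0
      rw [hF0] at hk
      exact WithTop.top_ne_coe hk
    · rw [hFk k hk0] at hk
      have hSu : S k = Finset.univ := congrArg Subtype.val (WithTop.coe_inj.mp hk)
      have h1 : σ 0 ∈ S k := hSu ▸ Finset.mem_univ _
      have h2 : k ≤ σ.symm (σ 0) := (hSmem k _).mp h1
      rw [Equiv.symm_apply_apply] at h2
      exact hk0 (Fin.le_zero_iff.mp h2)
  -- the weights
  set c : ℕ → ℝ := fun m => ((n + 1 - m : ℕ) : ℝ) with hc
  set wn : ℕ → ℝ := fun m => if m = 0 then p.2 else c m * (rn m - rn (m - 1)) with hwn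
  have hw0 : wn 0 = p.2 := by simp [hwn]
  have hwk : ∀ m : ℕ, m ≠ 0 → wn m = c m * (rn m - rn (m - 1)) := by
    intro m hm
    simp [hwn, hm]
  have hcne : ∀ k : Fin (n + 1), c (k : ℕ) ≠ 0 := by
    intro k
    simp only [hc]
    have := k.isLt
    exact_mod_cast Nat.sub_ne_zero_of_lt (by omega)
  have hwnn : ∀ k : Fin (n + 1), 0 ≤ wn (k : ℕ) := by
    intro k
    by_cases hk : (k : ℕ) = 0
    · rw [hk, hw0]; exact ht
    · rw [hwk _ hk]
      refine mul_nonneg ?_ (sub_nonneg.mpr ?_)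
      · simp only [hc]
        exact Nat.cast_nonneg _
      · exact hrn_mono _ _ (Nat.sub_le _ _) k.isLt
  have hw1 : ∑ k : Fin (n + 1), wn (k : ℕ) = 1 := by
    rw [Fin.sum_univ_eq_sum_range (fun m => wn m) (n + 1), Finset.sum_range_succ' wn n]
    have hstep : ∀ i ∈ Finset.range n,
        wn (i + 1) = (c (i + 1) * rn (i + 1) - c i * rn i) + rn i := by
      intro i hi
      have hi' : i < n := Finset.mem_range.mp hi
      rw [hwk (i + 1) (Nat.succ_ne_zero i), Nat.add_sub_cancel]
      have hci : c i = c (i + 1) + 1 := by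
        simp only [hc]
        rw [Nat.cast_sub (by omega), Nat.cast_sub (by omega)]
        push_cast
        ring
      rw [hci]
      ring
    rw [Finset.sum_congr rfl hstep, Finset.sum_add_distrib,
      Finset.sum_range_sub (fun m => c m * rn m) n]
    have hc0 : c 0 * rn 0 = 0 := by rw [hrn0]; ring
    have hcn : c n = 1 := by
      simp only [hc]
      have h1 : n + 1 - n = 1 := by omega
      rw [h1]
      norm_num
    have hsum' : ∑ m ∈ Finset.range n, rn m + rn n = 1 - p.2 := by
      rw [← Finset.sum_range_succ rn n]
      exact hrsum
    rw [hw0, hc0, hcn]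
    linarith [hsum']
  -- the convex combination hits p
  have hpt : ∑ k : Fin (n + 1), wn (k : ℕ) • vertexPt n (F k) = p := by
    refine Prod.ext ?_ ?_
    · rw [Prod.fst_sum]
      funext j
      rw [Finset.sum_apply]
      set M : Fin (n + 1) := σ.symm j with hM
      have hterm : ∀ k : Fin (n + 1),
          (wn (k : ℕ) • vertexPt n (F k)).1 j
            = rn (min (k : ℕ) (M : ℕ)) - rn (min ((k : ℕ) - 1) (M : ℕ)) := by
        intro k
        by_cases hk0 : k = 0
        · subst hk0
          rw [hF0, vertexPt_top]
          simp [Nat.zero_min]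
        · have hk' : (k : ℕ) ≠ 0 := fun h => hk0 (Fin.ext (by simp [h]))
          rw [hFk k hk0, vertexPt_coe n ⟨S k, hSne k⟩]
          simp only [Prod.smul_fst, Pi.smul_apply, smul_eq_mul]
          by_cases hkM : k ≤ M
          · have hmem : j ∈ S k := (hSmem k j).mpr (hM ▸ hkM)
            rw [if_pos hmem, hScard k, hwk _ hk']
            have hcast : ((n + 1 - (k : ℕ) : ℕ) : ℝ) = c (k : ℕ) := by simp [hc]
            rw [hcast, mul_comm (c (k : ℕ)) (rn (k : ℕ) - rn ((k : ℕ) - 1)), mul_assoc,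
              mul_inv_cancel₀ (hcne k), mul_one]
            have hkM' : (k : ℕ) ≤ (M : ℕ) := hkM
            rw [Nat.min_eq_left hkM', Nat.min_eq_left (by omega)]
          · have hmem : j ∉ S k := fun hmem => hkM ((hSmem k j).mp hmem)
            rw [if_neg hmem, mul_zero]
            have hMk : (M : ℕ) < (k : ℕ) := lt_of_not_ge hkM
            rw [Nat.min_eq_right (le_of_lt hMk), Nat.min_eq_right (by omega), sub_self]
      rw [Finset.sum_congr rfl (fun k _ => hterm k)]
      rw [Fin.sum_univ_eq_sum_range
        (fun m => rn (min m (M : ℕ)) - rn (min (m - 1) (M : ℕ))) (n + 1)]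
      rw [Finset.sum_range_succ']
      simp only [Nat.add_sub_cancel, Nat.zero_sub, sub_self, add_zero]
      rw [Finset.sum_range_sub (fun m => rn (min m (M : ℕ))) n]
      have hMn : (M : ℕ) ≤ n := by have := M.isLt; omega
      rw [Nat.min_eq_right hMn, Nat.zero_min, hrn0, sub_zero]
      rw [hrfin M, hM, Equiv.apply_symm_apply]
    · rw [Prod.snd_sum]
      rw [Finset.sum_eq_single (0 : Fin (n + 1))]
      · rw [hF0, vertexPt_top]
        simp only [Prod.smul_snd, smul_eq_mul, mul_one, Fin.val_zero]
        exact hw0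
      · intro b _ hb
        rw [hFk b hb, vertexPt_coe n ⟨S b, hSne b⟩]
        simp only [Prod.smul_snd, smul_eq_mul, mul_zero]
      · intro h
        exact absurd (Finset.mem_univ _) h
  refine ⟨Finset.image F Finset.univ, hchain, hcV, ?_⟩
  have key := Finset.centerMass_mem_convexHull (Finset.univ : Finset (Fin (n + 1)))
    (w := fun k => wn (k : ℕ)) (fun i _ => hwnn i) (by rw [hw1]; norm_num)
    (z := fun k => vertexPt n (F k))
    (fun i _ => Set.mem_image_of_mem _
      (Finset.mem_coe.mpr (Finset.mem_image_of_mem F (Finset.mem_univ i))))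
  rwa [Finset.centerMass_eq_of_sum_1 _ _ hw1, hpt] at key

theorem cone_subdivision_retraction (n : ℕ) :
    Monotone (retr n) ∧
    retr n (cV n) = ⊤ ∧
    (∀ x : WithTop (P n), x ≠ cV n → retr n x = x) ∧
    (∀ x : WithTop (P n), retr n x ≠ cV n) ∧
    (⋃ (ch : Finset (WithTop (P n))) (_ : IsChain (· ≤ ·) (ch : Set (WithTop (P n))))
        (_ : cV n ∉ ch), convexHull ℝ (vertexPt n '' (ch : Set (WithTop (P n))))) =
      hornSet n := by
  refine ⟨?_, retr_cV n, fun x hx => retr_of_ne hx, ?_, ?_⟩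
  · intro x y hxy
    by_cases hy : y = cV n
    · subst hy
      rw [retr_cV]; exact le_top
    · rw [retr_of_ne hy]
      by_cases hx : x = cV n
      · subst hx
        rcases cV_le_iff hxy with h | h
        · exact absurd h hy
        · subst h; rw [retr_cV]
      · rw [retr_of_ne hx]; exact hxy
  · intro x
    by_cases hx : x = cV n
    · subst hx; rw [retr_cV]; exact WithTop.top_ne_coe
    · rw [retr_of_ne hx]; exact hx
  · ext p
    simp only [Set.mem_iUnion]
    constructor
    · rintro ⟨ch, h1, h2, hmem⟩
      exact chain_hull_subset_horn n ch h1 h2 hmem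
    · intro hp
      obtain ⟨ch, h1, h2, h3⟩ := horn_subset_union n hp
      exact ⟨ch, h1, h2, h3⟩

end ConeSubdivision
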